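/- Let A : H₁ → H₂ be bounded linear with ‖A‖ > 0 and T : H₂ → H₂ be α-SQNE (α ≥ 0) with (im A) ∩ Fix T ≠ ∅. Define the extrapolated Landweber-type operator V_τ x := x + σ(x) A*(TAx − Ax) where σ(x) = ‖TAx − Ax‖²/‖A*(TAx − Ax)‖² if Ax ∉ Fix T, and V_τ x := x otherwise. Then Fix V_τ = A⁻¹(Fix T) and V_τ is α-strongly quasi-nonexpansive. -/

import Mathlib

open scoped RealInnerProductSpace

lemma key_ineq {H₁ H₂ : Type*} [NormedAddCommGroup H₁] [InnerProductSpace ℝ H₁]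
    [CompleteSpace H₁] [NormedAddCommGroup H₂] [InnerProductSpace ℝ H₂] [CompleteSpace H₂]
    (A : H₁ →L[ℝ] H₂) (T : H₂ → H₂) (α : ℝ)
    (hT : ∀ (u z : H₂), T z = z → ‖T u - z‖ ^ 2 ≤ ‖u - z‖ ^ 2 - α * ‖T u - u‖ ^ 2)
    (x z : H₁) (hz : T (A z) = A z) :
    ⟪(ContinuousLinearMap.adjoint A) (T (A x) - A x), x - z⟫ ≤
      -((1 + α) / 2) * ‖T (A x) - A x‖ ^ 2 := by
  have h1 := hT (A x) (A z) hz
  have h2 : T (A x) - A z = (T (A x) - A x) + (A x - A z) := by abel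
  rw [h2, norm_add_sq_real] at h1
  have h3 : ⟪(ContinuousLinearMap.adjoint A) (T (A x) - A x), x - z⟫
      = ⟪T (A x) - A x, A x - A z⟫ := by
    rw [ContinuousLinearMap.adjoint_inner_left, map_sub]
  rw [h3]
  nlinarith [h1]

theorem stmt_10 {H₁ H₂ : Type*} [NormedAddCommGroup H₁] [InnerProductSpace ℝ H₁]
    [CompleteSpace H₁] [NormedAddCommGroup H₂] [InnerProductSpace ℝ H₂] [CompleteSpace H₂]
    (A : H₁ →L[ℝ] H₂) (hA : ‖A‖ > 0)
    (T : H₂ → H₂) (α : ℝ) (hα : α ≥ 0)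
    (hfix : ∃ z : H₂, T z = z)
    (hT : ∀ (u z : H₂), T z = z → ‖T u - z‖ ^ 2 ≤ ‖u - z‖ ^ 2 - α * ‖T u - u‖ ^ 2)
    (him : ∃ w : H₁, T (A w) = A w)
    (Vτ : H₁ → H₁)
    (hV₁ : ∀ x : H₁, T (A x) ≠ A x →
      Vτ x = x + (‖T (A x) - A x‖ ^ 2 / ‖(ContinuousLinearMap.adjoint A) (T (A x) - A x)‖ ^ 2) •
        (ContinuousLinearMap.adjoint A) (T (A x) - A x))
    (hV₂ : ∀ x : H₁, T (A x) = A x → Vτ x = x) :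
    (∀ x : H₁, Vτ x = x ↔ T (A x) = A x) ∧
      (∀ (x z : H₁), T (A z) = A z → ‖Vτ x - z‖ ^ 2 ≤ ‖x - z‖ ^ 2 - α * ‖Vτ x - x‖ ^ 2) := by
  -- auxiliary: if T(Ax) ≠ Ax then adjoint A (TAx - Ax) ≠ 0
  have hy : ∀ x : H₁, T (A x) ≠ A x → (ContinuousLinearMap.adjoint A) (T (A x) - A x) ≠ 0 := by
    intro x hx
    obtain ⟨w, hw⟩ := him
    have hk := key_ineq A T α hT x w hw
    have hu : ‖T (A x) - A x‖ ^ 2 > 0 := by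
      have h : T (A x) - A x ≠ 0 := sub_ne_zero.mpr hx
      exact pow_pos (norm_pos_iff.mpr h) 2
    intro h0
    rw [h0, inner_zero_left] at hk
    nlinarith
  constructor
  · intro x
    constructor
    · intro hVx
      by_contra hx
      have hy' := hy x hx
      have hu : ‖T (A x) - A x‖ ^ 2 > 0 := by
        have h : T (A x) - A x ≠ 0 := sub_ne_zero.mpr hx
        exact pow_pos (norm_pos_iff.mpr h) 2
      have hyn : ‖(ContinuousLinearMap.adjoint A) (T (A x) - A x)‖ ^ 2 > 0 :=
        pow_pos (norm_pos_iff.mpr hy') 2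
      have := hV₁ x hx
      rw [hVx] at this
      have hsm : (‖T (A x) - A x‖ ^ 2 / ‖(ContinuousLinearMap.adjoint A) (T (A x) - A x)‖ ^ 2) •
          (ContinuousLinearMap.adjoint A) (T (A x) - A x) = 0 := by
        have := this.symm
        rwa [add_eq_left] at this
      rcases smul_eq_zero.mp hsm with h | h
      · have : ‖T (A x) - A x‖ ^ 2 / ‖(ContinuousLinearMap.adjoint A) (T (A x) - A x)‖ ^ 2 > 0 :=
          div_pos hu hyn
        linarith
      · exact hy' h
    · exact hV₂ x
  · intro x z hz
    by_cases hx : T (A x) = A x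
    · rw [hV₂ x hx]
      simp
    · set u := T (A x) - A x with hu_def
      set y := (ContinuousLinearMap.adjoint A) u with hy_def
      have hun : ‖u‖ ^ 2 > 0 := by
        have h : u ≠ 0 := sub_ne_zero.mpr hx
        exact pow_pos (norm_pos_iff.mpr h) 2
      have hyn : ‖y‖ ^ 2 > 0 := by
        exact pow_pos (norm_pos_iff.mpr (hy x hx)) 2
      set σ := ‖u‖ ^ 2 / ‖y‖ ^ 2 with hσ_def
      have hσpos : σ > 0 := div_pos hun hyn
      have hσy : σ * ‖y‖ ^ 2 = ‖u‖ ^ 2 := by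
        rw [hσ_def]; exact div_mul_cancel₀ _ (ne_of_gt hyn)
      have hk := key_ineq A T α hT x z hz
      rw [← hy_def] at hk
      have hVx := hV₁ x hx
      have e1 : Vτ x - z = (x - z) + σ • y := by rw [hVx]; abel
      have e2 : Vτ x - x = σ • y := by rw [hVx]; abel
      rw [e1, e2, norm_add_sq_real, norm_smul, real_inner_smul_right]
      have habs : ‖σ‖ = σ := abs_of_pos hσpos
      rw [habs]
      have hsym : ⟪x - z, y⟫ = ⟪y, x - z⟫ := real_inner_comm _ _
      rw [hsym]
      have hsq : (σ * ‖y‖) ^ 2 = σ * ‖u‖ ^ 2 := by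
        have : (σ * ‖y‖) ^ 2 = σ * (σ * ‖y‖ ^ 2) := by ring
        rw [this, hσy]
      rw [hsq]
      nlinarith [mul_le_mul_of_nonneg_left hk (le_of_lt hσpos)]
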